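/- Let G be a bipartite simple graph with a perfect ordered matching M = {{i, s+i} : i = 1,…,s} whose free parameter set X = {1,…,s} and partner set Y = {s+1,…,2s} form a bipartition of G. Write ℓ₀(M) = 2k − 1, and for each i = 1,…,s write ℓ(s+i) = 2k_i − 1, and set α_i = k_i − 1 and α_{s+i} = k − k_i. Then (1) α_i + α_{s+i} = k − 1 for all i = 1,…,s, and (2) if {i, s+j} ∈ E(G) with i < j, then α_i + α_{s+j} ≥ k. -/

import Mathlib

open SimpleGraph

namespace DS

variable {V : Type*}

/-- The set of edges of a matching presented by the endpoint functions `u`, `v`. -/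
def omEdges {s : ℕ} (u v : Fin s → V) : Set (Sym2 V) := {e | ∃ i, e = s(u i, v i)}

/-- `(u, v)` describes a matching of size `s` in `G`: the `2s` endpoints are pairwise
distinct (so the edges are pairwise disjoint) and each pair `{u i, v i}` is an edge. -/
def IsMatchingPair (G : SimpleGraph V) {s : ℕ} (u v : Fin s → V) : Prop :=
  Function.Injective (Sum.elim u v) ∧ ∀ i, G.Adj (u i) (v i)

/-- `(u, v)` describes an ordered matching: a matching such that `{u 1, …, u s}` is an
independent set and `{u i, v j} ∈ E(G)` implies `i ≤ j`. -/
def IsOrderedMatching (G : SimpleGraph V) {s : ℕ} (u v : Fin s → V) : Prop :=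
  IsMatchingPair G u v ∧ (∀ i j, ¬ G.Adj (u i) (u j)) ∧
    ∀ i j, G.Adj (u i) (v j) → i ≤ j

/-- The matching number of `G`. -/
noncomputable def nu (G : SimpleGraph V) : ℕ :=
  sSup {s | ∃ u v : Fin s → V, IsMatchingPair G u v}

/-- The ordered matching number of `G`. -/
noncomputable def nu0 (G : SimpleGraph V) : ℕ :=
  sSup {s | ∃ u v : Fin s → V, IsOrderedMatching G u v}

/-- A walk is `M`-alternating if its edges are alternately in `M` and not in `M`. -/
def IsAlt {G : SimpleGraph V} (M : Set (Sym2 V)) {a b : V} (w : G.Walk a b) : Prop :=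
  List.Chain' (fun e f => (e ∈ M ↔ f ∉ M)) w.edges

/-- The walk `w` is nonempty and its first and last edges belong to `M`. -/
def FirstLastInM {G : SimpleGraph V} (M : Set (Sym2 V)) {a b : V} (w : G.Walk a b) : Prop :=
  ∃ h : w.edges ≠ [], w.edges.head h ∈ M ∧ w.edges.getLast h ∈ M

/-- `w` is an `M`-admissible path for the vertex `x` (with respect to the ordered matching
presented by `(u, v)`): an `M`-alternating path with origin `x` whose first and last
edges are in `M`, each of whose edges has an end in `A = range u` and an end in
`B = range v`. -/
def IsAdmissible {G : SimpleGraph V} {s : ℕ} (u v : Fin s → V) {a b : V}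
    (w : G.Walk a b) (x : V) : Prop :=
  a = x ∧ IsAlt (omEdges u v) w ∧ FirstLastInM (omEdges u v) w ∧
    ∀ e ∈ w.edges, ∃ i j, e = s(u i, v j)

/-- `ℓ(x)`: the length of a longest `M`-admissible path for `x`. -/
noncomputable def ellv (G : SimpleGraph V) {s : ℕ} (u v : Fin s → V) (x : V) : ℕ :=
  sSup {n | ∃ (b : V) (w : G.Walk x b), IsAdmissible u v w x ∧ w.length = n}

/-- `ℓ(M)`: the length of a longest `M`-alternating path in `G`. -/
noncomputable def ellM (G : SimpleGraph V) (M : Set (Sym2 V)) : ℕ :=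
  sSup {n | ∃ (a b : V) (w : G.Walk a b), IsAlt M w ∧ w.length = n}

/-- `ℓ₀(M) = max {ℓ(x) : x ∈ B}`. -/
noncomputable def ell0 (G : SimpleGraph V) {s : ℕ} (u v : Fin s → V) : ℕ :=
  sSup {n | ∃ i : Fin s, ellv G u v (v i) = n}

/-- `ℓ₁(M) = max {ℓ(x) + ℓ(y) + 1 : {x, y} ∈ E(G[B])}` (with the convention that this
is `0` when `B` is independent, since `sSup ∅ = 0`). -/
noncomputable def ell1 (G : SimpleGraph V) {s : ℕ} (u v : Fin s → V) : ℕ :=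
  sSup {n | ∃ i j : Fin s, G.Adj (v i) (v j) ∧ ellv G u v (v i) + ellv G u v (v j) + 1 = n}

/-- `ℓ(G) = min {ℓ(M) : M a maximum ordered matching of G}`. -/
noncomputable def ellG (G : SimpleGraph V) : ℕ :=
  sInf {n | ∃ u v : Fin (nu0 G) → V, IsOrderedMatching G u v ∧ ellM G (omEdges u v) = n}

open MvPolynomial in
/-- The `n`-th symbolic power `J(G)^{(n)} = ⋂_{{u,v} ∈ E(G)} (x_u, x_v)^n` of the cover
ideal of `G`. -/
noncomputable def symbPow (K : Type*) [Field K] (G : SimpleGraph V) (n : ℕ) :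
    Ideal (MvPolynomial V K) :=
  ⨅ (p : V × V) (_ : G.Adj p.1 p.2), (Ideal.span {X p.1, X p.2}) ^ n

/-- The cover ideal `J(G) = ⋂_{{u,v} ∈ E(G)} (x_u, x_v)`. -/
noncomputable def coverIdeal (K : Type*) [Field K] (G : SimpleGraph V) :
    Ideal (MvPolynomial V K) :=
  symbPow K G 1

/-- `depth R/I`: the length of a maximal `R/I`-regular sequence contained in the maximal
homogeneous ideal `(x_1, …, x_r)` of `R = K[x_1, …, x_r]`. -/
noncomputable def depthQ (K : Type*) [Field K] (I : Ideal (MvPolynomial V K)) : ℕ :=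
  sSup {n | ∃ rs : List (MvPolynomial V K), rs.length = n ∧
    (∀ f ∈ rs, f ∈ Ideal.span (Set.range (MvPolynomial.X : V → MvPolynomial V K))) ∧
    RingTheory.Sequence.IsRegular (MvPolynomial V K ⧸ I) rs}

/-- The stability index of the symbolic depth function of `J(G)`:
`sdst(J(G)) = min {n₀ ≥ 1 : depth R/J(G)^{(n)} = r − ν₀(G) − 1 for all n ≥ n₀}`. -/
noncomputable def sdst (K : Type*) [Field K] [Fintype V] (G : SimpleGraph V) : ℕ :=
  sInf {n0 | 1 ≤ n0 ∧ ∀ n, n0 ≤ n →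
    depthQ K (symbPow K G n) = Fintype.card V - nu0 G - 1}

/-- The stability index of the depth function of `J(G)`:
the least `n₀ ≥ 1` such that `depth R/J(G)^n` is constant for `n ≥ n₀` (hence equal to
its limit value). -/
noncomputable def dst (K : Type*) [Field K] [Fintype V] (G : SimpleGraph V) : ℕ :=
  sInf {n0 | 1 ≤ n0 ∧ ∀ m n, n0 ≤ m → n0 ≤ n →
    depthQ K (coverIdeal K G ^ m) = depthQ K (coverIdeal K G ^ n)}

end DS

/-- Let `G` be a bipartite graph with a perfect ordered matching `M` (presented by
`u, v : Fin t → V`) whose free parameter set `A = range u` and partner set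
`B = range v` form a bipartition of `G`. Write `ℓ₀(M) = 2k − 1` and
`ℓ(v i) = 2 kᵢ − 1`, and set `α_{u i} = kᵢ − 1`, `α_{v i} = k − kᵢ`. Then
(1) `α_{u i} + α_{v i} = k − 1` for all `i`, and
(2) if `{u i, v j} ∈ E(G)` with `i < j`, then `α_{u i} + α_{v j} ≥ k`. -/
theorem stmt_9 {V : Type*} [Fintype V] (G : SimpleGraph V) {t : ℕ} (u v : Fin t → V)
    (hM : DS.IsOrderedMatching G u v)
    (hperf : Function.Surjective (Sum.elim u v))
    (hB : ∀ i j : Fin t, ¬ G.Adj (v i) (v j))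
    (k : ℕ) (hk1 : 1 ≤ k) (hk : DS.ell0 G u v = 2 * k - 1)
    (ki : Fin t → ℕ) (hki1 : ∀ i, 1 ≤ ki i)
    (hki : ∀ i, DS.ellv G u v (v i) = 2 * ki i - 1) :
    (∀ i, (ki i - 1) + (k - ki i) = k - 1) ∧
    (∀ i j : Fin t, i < j → G.Adj (u i) (v j) → k ≤ (ki i - 1) + (k - ki j)) := by
  classical
  have hbdd : ∀ S : Set ℕ, sSup S ≠ 0 → BddAbove S := by
    intro S hS
    by_contra hb
    exact hS (Set.Infinite.Nat.sSup_eq_zero (fun hfin => hb hfin.bddAbove))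
  have hk' : sSup {n | ∃ i : Fin t, DS.ellv G u v (v i) = n} = 2 * k - 1 := hk
  have hle : ∀ i : Fin t, ki i ≤ k := by
    intro i
    have hb0 : BddAbove {n | ∃ i : Fin t, DS.ellv G u v (v i) = n} := by
      apply hbdd; rw [hk']; omega
    have hmem : 2 * ki i - 1 ∈ {n | ∃ i : Fin t, DS.ellv G u v (v i) = n} :=
      ⟨i, hki i⟩
    have h2 := le_csSup hb0 hmem
    rw [hk'] at h2
    have := hki1 i
    omega
  refine ⟨fun i => by have := hle i; have := hki1 i; omega, ?_⟩
  intro i j hij hadj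
  obtain ⟨⟨hinj, hadjM⟩, hAind, hord⟩ := hM
  have huv : ∀ a b : Fin t, u a ≠ v b := by
    intro a b h
    exact absurd (hinj (show Sum.elim u v (Sum.inl a) = Sum.elim u v (Sum.inr b) from h))
      (by simp)
  have hvv : ∀ a b : Fin t, v a = v b → a = b := by
    intro a b h
    have := hinj (show Sum.elim u v (Sum.inr a) = Sum.elim u v (Sum.inr b) from h)
    simpa using this
  have huu : ∀ a b : Fin t, u a = u b → a = b := by
    intro a b h
    have := hinj (show Sum.elim u v (Sum.inl a) = Sum.elim u v (Sum.inl b) from h)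
    simpa using this
  have hSj : sSup {n | ∃ (b : V) (w : G.Walk (v j) b),
      DS.IsAdmissible u v w (v j) ∧ w.length = n} = 2 * ki j - 1 := hki j
  have hne0 : (2 : ℕ) * ki j - 1 ≠ 0 := by have := hki1 j; omega
  have hbj : BddAbove {n | ∃ (b : V) (w : G.Walk (v j) b),
      DS.IsAdmissible u v w (v j) ∧ w.length = n} := by
    apply hbdd; rw [hSj]; exact hne0
  have hnej : {n | ∃ (b : V) (w : G.Walk (v j) b),
      DS.IsAdmissible u v w (v j) ∧ w.length = n}.Nonempty := by
    by_contra h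
    rw [Set.not_nonempty_iff_eq_empty] at h
    rw [h] at hSj
    simp at hSj
    omega
  have hmemj := Nat.sSup_mem hnej hbj
  rw [hSj] at hmemj
  obtain ⟨b, w, ⟨-, halt, ⟨hwne, hhead, hlast⟩, hform⟩, hwlen⟩ := hmemj
  have h1 : G.Adj (v i) (u i) := (hadjM i).symm
  have h2 : G.Adj (u i) (v j) := hadj
  set M := DS.omEdges u v with hMdef
  have e1M : s(v i, u i) ∈ M := ⟨i, Sym2.eq_swap⟩
  have e2M : s(u i, v j) ∉ M := by
    rintro ⟨a, ha⟩
    rw [Sym2.eq_iff] at ha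
    rcases ha with ⟨h3, h4⟩ | ⟨h3, h4⟩
    · exact hij.ne ((huu _ _ h3).trans (hvv _ _ h4.symm))
    · exact huv _ _ h3
  let w' : G.Walk (v i) b := SimpleGraph.Walk.cons h1 (SimpleGraph.Walk.cons h2 w)
  have hw'edges : w'.edges = s(v i, u i) :: s(u i, v j) :: w.edges := rfl
  have hadm : DS.IsAdmissible u v w' (v i) := by
    refine ⟨rfl, ?_, ?_, ?_⟩
    · show List.Chain' _ w'.edges
      rw [hw'edges, List.Chain', List.isChain_cons_cons]
      constructor
      · simp [← hMdef, e1M, e2M]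
      · rw [List.isChain_cons]
        refine ⟨?_, halt⟩
        intro y hy
        have hy' : y = w.edges.head hwne := by
          rw [List.head?_eq_head hwne] at hy
          exact (Option.some_injective _ hy).symm
        rw [hy']
        exact iff_of_false e2M (fun h => h hhead)
    · refine ⟨by rw [hw'edges]; simp, ?_, ?_⟩
      · show (s(v i, u i) :: s(u i, v j) :: w.edges).head (by simp) ∈ M
        rw [List.head_cons]
        exact e1M
      · show (s(v i, u i) :: s(u i, v j) :: w.edges).getLast (by simp) ∈ M
        rw [List.getLast_cons (by simp), List.getLast_cons hwne]
        exact hlast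
    · intro e he
      rw [hw'edges, List.mem_cons, List.mem_cons] at he
      rcases he with h | h | h
      · exact ⟨i, i, by rw [h, Sym2.eq_swap]⟩
      · exact ⟨i, j, h⟩
      · exact hform e h
  have hSi : sSup {n | ∃ (b : V) (w : G.Walk (v i) b),
      DS.IsAdmissible u v w (v i) ∧ w.length = n} = 2 * ki i - 1 := hki i
  have hbi : BddAbove {n | ∃ (b : V) (w : G.Walk (v i) b),
      DS.IsAdmissible u v w (v i) ∧ w.length = n} := by
    apply hbdd; rw [hSi]; have := hki1 i; omega
  have hmemi : w'.length ∈ {n | ∃ (b : V) (w : G.Walk (v i) b),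
      DS.IsAdmissible u v w (v i) ∧ w.length = n} := ⟨b, w', hadm, rfl⟩
  have hle2 := le_csSup hbi hmemi
  rw [hSi] at hle2
  have hw'len : w'.length = w.length + 2 := rfl
  have h1le := hki1 i
  have h2le := hki1 j
  have hki_le := hle i
  have hkj_le := hle j
  omega
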